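/- For every integer n ≥ 2 and reals x, y > 0, |ψ₂⁽ⁿ⁾(x·a + y·(1-a))| ≤ |ψ₂⁽ⁿ⁾(x)|^a · |ψ₂⁽ⁿ⁾(y)|^{1-a} for all a ∈ [0,1]; i.e., x ↦ (-1)^{n+1} ψ₂⁽ⁿ⁾(x) is logarithmically convex on (0,∞). -/

import Mathlib

open Real

lemma summable_S (n : ℕ) (hn : 2 ≤ n) {z : ℝ} (hz : 0 < z) :
    Summable (fun k : ℕ => (1 + (k : ℝ)) / (z + k) ^ (n + 1)) := by
  set m := min z 1 with hmdef
  have hm : 0 < m := lt_min hz one_pos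
  have hbase : Summable (fun k : ℕ => (1 / m ^ (n + 1)) * (1 / ((k : ℝ) + 1) ^ n)) := by
    apply Summable.mul_left
    have h := (Real.summable_one_div_nat_pow (p := n)).mpr hn
    have h2 := (summable_nat_add_iff 1).mpr h
    convert h2 using 2 with k
    push_cast
    · rfl
    · push_cast; ring
  apply Summable.of_nonneg_of_le _ _ hbase
  · intro k
    positivity
  · intro k
    have hk : (0:ℝ) ≤ (k:ℝ) := Nat.cast_nonneg k
    have hkey : m * (1 + k) ≤ z + k := by
      have h1 : m ≤ z := min_le_left _ _
      have h2 : m ≤ 1 := min_le_right _ _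
      nlinarith
    have heq : (1 / m ^ (n + 1)) * (1 / ((k : ℝ) + 1) ^ n)
        = (1 + (k:ℝ)) / (m * (1 + k)) ^ (n + 1) := by
      rw [mul_pow, pow_succ (1 + (k:ℝ))]
      have h1k : (0:ℝ) < 1 + k := by positivity
      field_simp
      ring
    rw [heq]
    gcongr

lemma S_nonneg (n : ℕ) {z : ℝ} (hz : 0 < z) :
    0 ≤ ∑' k : ℕ, (1 + (k : ℝ)) / (z + k) ^ (n + 1) :=
  tsum_nonneg fun k => by positivity

noncomputable def psi2 (n : ℕ) (x : ℝ) : ℝ :=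
  (-1) ^ (n + 1) * (n.factorial : ℝ) * ∑' k : ℕ, (1 + (k : ℝ)) / (x + k) ^ (n + 1)

lemma abs_psi2 (n : ℕ) {z : ℝ} (hz : 0 < z) :
    |psi2 n z| = (n.factorial : ℝ) * ∑' k : ℕ, (1 + (k : ℝ)) / (z + k) ^ (n + 1) := by
  unfold psi2
  rw [abs_mul, abs_mul, abs_pow, abs_neg, abs_one, one_pow, one_mul,
    abs_of_nonneg (Nat.cast_nonneg _), abs_of_nonneg (S_nonneg n hz)]

theorem stmt_6 (n : ℕ) (hn : 2 ≤ n) (x y : ℝ) (hx : 0 < x) (hy : 0 < y)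
    (a : ℝ) (ha : a ∈ Set.Icc (0 : ℝ) 1) :
    |psi2 n (x * a + y * (1 - a))| ≤ |psi2 n x| ^ a * |psi2 n y| ^ (1 - a) := by
  obtain ⟨ha0, ha1⟩ := ha
  rcases eq_or_lt_of_le ha0 with h0 | h0
  · simp [← h0]
  rcases eq_or_lt_of_le ha1 with h1 | h1
  · simp [h1]
  -- 0 < a < 1
  have hb0 : 0 < 1 - a := by linarith
  set z := x * a + y * (1 - a) with hzdef
  have hz : 0 < z := by positivity
  set u : ℕ → ℝ := fun k => (1 + (k : ℝ)) / (x + k) ^ (n + 1) with hu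
  set v : ℕ → ℝ := fun k => (1 + (k : ℝ)) / (y + k) ^ (n + 1) with hv
  set w : ℕ → ℝ := fun k => (1 + (k : ℝ)) / (z + k) ^ (n + 1) with hw
  have hun : ∀ k, 0 ≤ u k := fun k => by have := hx; positivity
  have hvn : ∀ k, 0 ≤ v k := fun k => by have := hy; positivity
  have hpq : Real.HolderConjugate (1/a) (1/(1-a)) := by
    rw [Real.holderConjugate_iff]; constructor
    · rw [lt_div_iff₀ h0]; linarith
    · simp only [one_div, inv_inv]; ring
  set f : ℕ → ℝ := fun k => (u k) ^ a with hf
  set g : ℕ → ℝ := fun k => (v k) ^ (1 - a) with hg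
  have hfp : ∀ k, f k ^ (1/a) = u k := fun k => by
    show (u k ^ a) ^ (1/a) = u k
    rw [one_div, ← Real.rpow_mul (hun k), mul_inv_cancel₀ h0.ne', Real.rpow_one]
  have hgp : ∀ k, g k ^ (1/(1-a)) = v k := fun k => by
    show (v k ^ (1-a)) ^ (1/(1-a)) = v k
    rw [one_div, ← Real.rpow_mul (hvn k), mul_inv_cancel₀ hb0.ne', Real.rpow_one]
  have hfsum : Summable fun k => f k ^ (1/a) := by
    simp_rw [hfp]; exact summable_S n hn hx
  have hgsum : Summable fun k => g k ^ (1/(1-a)) := by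
    simp_rw [hgp]; exact summable_S n hn hy
  have hfn : ∀ k, 0 ≤ f k := fun k => Real.rpow_nonneg (hun k) _
  have hgn : ∀ k, 0 ≤ g k := fun k => Real.rpow_nonneg (hvn k) _
  obtain ⟨hsum_fg, hineq⟩ :=
    summable_and_inner_le_Lp_mul_Lq_tsum_of_nonneg hpq hfn hgn hfsum hgsum
  -- termwise bound: w k ≤ f k * g k
  have hterm : ∀ k, w k ≤ f k * g k := by
    intro k
    have hk : (0:ℝ) ≤ (k:ℝ) := Nat.cast_nonneg k
    have hxk : (0:ℝ) < x + k := by positivity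
    have hyk : (0:ℝ) < y + k := by positivity
    have hamgm : (x + k) ^ a * (y + k) ^ (1 - a) ≤ a * (x + k) + (1 - a) * (y + k) :=
      Real.geom_mean_le_arith_mean2_weighted ha0 hb0.le hxk.le hyk.le (by ring)
    have hz_eq : a * (x + k) + (1 - a) * (y + k) = z + k := by rw [hzdef]; ring
    rw [hz_eq] at hamgm
    have h1k : (0:ℝ) < 1 + (k:ℝ) := by positivity
    have hx1 : ((x + (k:ℝ)) ^ (n+1) : ℝ) ^ a = ((x + (k:ℝ)) ^ a) ^ (n+1) := by
      rw [← Real.rpow_natCast (x + (k:ℝ)) (n+1), ← Real.rpow_mul hxk.le, mul_comm,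
        Real.rpow_mul hxk.le, Real.rpow_natCast]
    have hy1 : ((y + (k:ℝ)) ^ (n+1) : ℝ) ^ (1-a) = ((y + (k:ℝ)) ^ (1-a)) ^ (n+1) := by
      rw [← Real.rpow_natCast (y + (k:ℝ)) (n+1), ← Real.rpow_mul hyk.le, mul_comm,
        Real.rpow_mul hyk.le, Real.rpow_natCast]
    have haa : a + (1 - a) = 1 := by ring
    have hfg : f k * g k = (1 + (k:ℝ)) / ((x + k) ^ a * (y + k) ^ (1 - a)) ^ (n + 1) := by
      show (u k) ^ a * (v k) ^ (1-a) = _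
      rw [hu, hv]
      simp only
      rw [Real.div_rpow h1k.le (by positivity), Real.div_rpow h1k.le (by positivity),
        hx1, hy1, div_mul_div_comm, ← Real.rpow_add h1k, haa, Real.rpow_one, ← mul_pow]
    rw [hfg, hw]
    simp only
    gcongr
  have hwsum : Summable w := summable_S n hn hz
  have hS : ∑' k, w k ≤ ∑' k, f k * g k := Summable.tsum_le_tsum hterm hwsum hsum_fg
  have hmain : ∑' k, w k ≤ (∑' k, u k) ^ a * (∑' k, v k) ^ (1 - a) := by
    calc ∑' k, w k ≤ ∑' k, f k * g k := hS
    _ ≤ (∑' k, f k ^ (1/a)) ^ (1/(1/a)) * (∑' k, g k ^ (1/(1-a))) ^ (1/(1/(1-a))) := by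
        simpa using hineq
    _ = (∑' k, u k) ^ a * (∑' k, v k) ^ (1 - a) := by
        simp_rw [hfp, hgp, one_div_one_div]
  rw [abs_psi2 n hz, abs_psi2 n hx, abs_psi2 n hy]
  have hfac : (0:ℝ) < n.factorial := by positivity
  rw [Real.mul_rpow hfac.le (S_nonneg n hx), Real.mul_rpow hfac.le (S_nonneg n hy)]
  have hfacsplit : (n.factorial : ℝ) ^ a * (n.factorial : ℝ) ^ (1 - a) = (n.factorial : ℝ) := by
    rw [← Real.rpow_add hfac]; simp
  have hkey2 : (n.factorial:ℝ) ^ a * (∑' k, u k) ^ a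
      * ((n.factorial:ℝ) ^ (1-a) * (∑' k, v k) ^ (1-a))
      = (n.factorial : ℝ) * ((∑' k, u k) ^ a * (∑' k, v k) ^ (1 - a)) := by
    rw [mul_mul_mul_comm, hfacsplit]
  rw [hkey2]
  exact mul_le_mul_of_nonneg_left hmain hfac.le
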